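/- Assume quasi-symmetry. Let ξ be a nonzero linear functional on ℝ^k, set I = {i : ξ(β_i) ≤ 0} and J = {i : ξ(β_i) = 0}. Then A_I ∩ A_J = Aff(F_ξ), where A_L = −β_L − C_L + ∇ for L ⊆ {1,…,N}, and F_ξ = {x∈∇ : ξ(x) = max_{y∈∇} ξ(y)} is the face of ∇ exposed by ξ and Aff denotes affine hull. -/
import Mathlib


open Pointwise
open scoped Classical

noncomputable section

/-- The zonotope `∇ = (1/2)∑_i [0, β_i]`. -/
def nabla {N k : ℕ} (β : Fin N → (Fin k → ℝ)) : Set (Fin k → ℝ) :=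
  (2⁻¹ : ℝ) • ∑ i : Fin N, segment ℝ 0 (β i)

/-- The convex cone `C_L` generated by `{β_i : i ∈ L}`. -/
def coneI {N k : ℕ} (β : Fin N → (Fin k → ℝ)) (L : Finset (Fin N)) :
    Set (Fin k → ℝ) :=
  {y | ∃ c : Fin N → ℝ, (∀ i, 0 ≤ c i) ∧ (∀ i, i ∉ L → c i = 0) ∧
    y = ∑ i, c i • β i}

/-- `A_L = −β_L − C_L + ∇`. -/
def AI {N k : ℕ} (β : Fin N → (Fin k → ℝ)) (L : Finset (Fin N)) :
    Set (Fin k → ℝ) :=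
  {x | ∃ c ∈ coneI β L, ∃ nn ∈ nabla β, x = -(∑ i ∈ L, β i) - c + nn}

/-- The face `F_ξ` of `∇` exposed by the linear functional `ξ`. -/
def exposedFace {N k : ℕ} (β : Fin N → (Fin k → ℝ))
    (ξ : (Fin k → ℝ) →ₗ[ℝ] ℝ) : Set (Fin k → ℝ) :=
  {x ∈ nabla β | ∀ y ∈ nabla β, ξ y ≤ ξ x}

section Aux

variable {N k : ℕ}

lemma mem_segment_zero {b y : Fin k → ℝ} :
    y ∈ segment ℝ (0 : Fin k → ℝ) b ↔ ∃ t : ℝ, t ∈ Set.Icc (0:ℝ) 1 ∧ y = t • b := by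
  rw [segment_eq_image]
  constructor
  · rintro ⟨t, ht, rfl⟩
    exact ⟨t, ht, by simp⟩
  · rintro ⟨t, ht, rfl⟩
    exact ⟨t, ht, by simp⟩

lemma mem_nabla_iff {β : Fin N → (Fin k → ℝ)} {x : Fin k → ℝ} :
    x ∈ nabla β ↔ ∃ s : Fin N → ℝ, (∀ i, s i ∈ Set.Icc (0:ℝ) 1) ∧
      x = (2⁻¹ : ℝ) • ∑ i, s i • β i := by
  unfold nabla
  rw [Set.mem_smul_set]
  constructor
  · rintro ⟨y, hy, rfl⟩
    rw [Set.mem_fintype_sum] at hy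
    obtain ⟨g, hg, rfl⟩ := hy
    choose s hs1 hs2 using fun i => mem_segment_zero.1 (hg i)
    exact ⟨s, hs1, by rw [Finset.sum_congr rfl fun i _ => hs2 i]⟩
  · rintro ⟨s, hs, rfl⟩
    refine ⟨∑ i, s i • β i, ?_, rfl⟩
    rw [Set.mem_fintype_sum]
    exact ⟨fun i => s i • β i, fun i => mem_segment_zero.2 ⟨s i, hs i, rfl⟩, rfl⟩

/-- Under quasi-symmetry, the sum of the `β i` over any index set which is
saturated with respect to lines is zero. -/
lemma sum_eq_zero_of_saturated {β : Fin N → (Fin k → ℝ)} (hβ0 : ∀ i, β i ≠ 0)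
    (hqs : ∀ L : Submodule ℝ (Fin k → ℝ), Module.finrank ℝ L = 1 →
      ∑ i ∈ Finset.univ.filter (fun i => β i ∈ L), β i = 0)
    (S : Finset (Fin N))
    (hS : ∀ i ∈ S, ∀ j, β j ∈ Submodule.span ℝ {β i} → j ∈ S) :
    ∑ i ∈ S, β i = 0 := by
  classical
  set f : Fin N → Submodule ℝ (Fin k → ℝ) := fun i => Submodule.span ℝ {β i} with hf
  rw [← Finset.sum_fiberwise_of_maps_to (t := S.image f)
    (fun i hi => Finset.mem_image_of_mem f hi) β]
  refine Finset.sum_eq_zero fun L hL => ?_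
  obtain ⟨i0, hi0S, rfl⟩ := Finset.mem_image.1 hL
  have key : S.filter (fun i => f i = f i0) =
      Finset.univ.filter (fun j => β j ∈ f i0) := by
    ext j
    simp only [Finset.mem_filter, Finset.mem_univ, true_and]
    constructor
    · rintro ⟨hjS, hfj⟩
      rw [← hfj]
      exact Submodule.mem_span_singleton_self _
    · intro hj
      have hfj : f j = f i0 := by
        obtain ⟨t, ht⟩ := Submodule.mem_span_singleton.1 hj
        have ht0 : t ≠ 0 := by
          rintro rfl
          rw [zero_smul] at ht
          exact hβ0 j ht.symm
        apply le_antisymm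
        · rw [hf]
          simp only
          rw [Submodule.span_le, Set.singleton_subset_iff]
          exact hj
        · rw [hf]
          simp only
          rw [Submodule.span_le, Set.singleton_subset_iff]
          have : β i0 = t⁻¹ • β j := by
            rw [← ht, smul_smul, inv_mul_cancel₀ ht0, one_smul]
          rw [this, SetLike.mem_coe]
          exact Submodule.smul_mem _ _ (Submodule.mem_span_singleton_self _)
      exact ⟨hS i0 hi0S j hj, hfj⟩
  rw [key]
  exact hqs _ (finrank_span_singleton (hβ0 i0))

end Aux

set_option maxHeartbeats 2000000 in
/-- **Lemma.** Under quasi-symmetry, with `I = {i : ξ(β_i) ≤ 0}` and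
`J = {i : ξ(β_i) = 0}`, one has `A_I ∩ A_J = Aff(F_ξ)`. -/
theorem AI_inter_AJ_eq_affine_hull_of_face
    {N k : ℕ} (hk : 1 ≤ k) (hNk : k ≤ N)
    (μ : (Fin N → ℝ) →ₗ[ℝ] (Fin k → ℝ))
    (hsurj : Function.Surjective μ)
    (β : Fin N → (Fin k → ℝ)) (hβ : ∀ i, β i = μ (Pi.single i 1))
    (hβ0 : ∀ i, β i ≠ 0)
    (hspan : Submodule.span ℝ (Set.range β) = ⊤)
    (hqs : ∀ L : Submodule ℝ (Fin k → ℝ), Module.finrank ℝ L = 1 →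
      ∑ i ∈ Finset.univ.filter (fun i => β i ∈ L), β i = 0)
    (ξ : (Fin k → ℝ) →ₗ[ℝ] ℝ) (hξ : ξ ≠ 0) :
    AI β (Finset.univ.filter (fun i => ξ (β i) ≤ 0)) ∩
        AI β (Finset.univ.filter (fun i => ξ (β i) = 0)) =
      (affineSpan ℝ (exposedFace β ξ) : Set (Fin k → ℝ)) := by
  classical
  set P : Finset (Fin N) := Finset.univ.filter (fun i => 0 < ξ (β i)) with hPdef
  set Neg : Finset (Fin N) := Finset.univ.filter (fun i => ξ (β i) < 0) with hNdef
  set Jf : Finset (Fin N) := Finset.univ.filter (fun i => ξ (β i) = 0) with hJdef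
  set If : Finset (Fin N) := Finset.univ.filter (fun i => ξ (β i) ≤ 0) with hIdef
  -- quasi-symmetry consequences
  have hJ0 : ∑ i ∈ Jf, β i = 0 := by
    refine sum_eq_zero_of_saturated hβ0 hqs Jf ?_
    intro i hi j hj
    obtain ⟨t, ht⟩ := Submodule.mem_span_singleton.1 hj
    simp only [hJdef, Finset.mem_filter, Finset.mem_univ, true_and] at hi ⊢
    rw [← ht, map_smul, smul_eq_mul, hi, mul_zero]
  have htot : ∑ i, β i = 0 :=
    sum_eq_zero_of_saturated hβ0 hqs Finset.univ (fun i _ j _ => Finset.mem_univ j)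
  have hsplit1 : ∑ i ∈ P, β i + ∑ i ∈ If, β i = 0 := by
    have hfilt : Finset.univ.filter (fun i => ¬ 0 < ξ (β i)) = If := by
      ext j
      simp [hIdef, not_lt]
    rw [← hfilt, ← htot, hPdef]
    exact Finset.sum_filter_add_sum_filter_not Finset.univ _ β
  have hsplit2 : ∑ i ∈ Jf, β i + ∑ i ∈ Neg, β i = ∑ i ∈ If, β i := by
    have h1 : If.filter (fun i => ξ (β i) = 0) = Jf := by
      ext j
      simp only [hIdef, hJdef, Finset.mem_filter, Finset.mem_univ, true_and]
      exact ⟨fun h => h.2, fun h => ⟨le_of_eq h, h⟩⟩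
    have h2 : If.filter (fun i => ¬ ξ (β i) = 0) = Neg := by
      ext j
      simp only [hIdef, hNdef, Finset.mem_filter, Finset.mem_univ, true_and]
      constructor
      · rintro ⟨h, h'⟩
        exact lt_of_le_of_ne h h'
      · intro h
        exact ⟨le_of_lt h, ne_of_lt h⟩
    rw [← h1, ← h2]
    exact Finset.sum_filter_add_sum_filter_not If _ β
  have hPNeg : ∑ i ∈ Neg, β i = -∑ i ∈ P, β i := by
    have h := hsplit1
    rw [← hsplit2, hJ0, zero_add] at h
    exact eq_neg_of_add_eq_zero_right h
  set p : Fin k → ℝ := (2⁻¹ : ℝ) • ∑ i ∈ P, β i with hp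
  set q : Fin k → ℝ := (2⁻¹ : ℝ) • ∑ i ∈ Neg, β i with hq
  have hqp : q = -p := by rw [hq, hp, hPNeg, smul_neg]
  have h2p : (2:ℝ) • p = ∑ i ∈ P, β i := by
    rw [hp, smul_smul]
    norm_num
  have hIf_sum : ∑ i ∈ If, β i = -((2:ℝ) • p) := by
    rw [← hsplit2, hJ0, zero_add, hPNeg, h2p]
  -- membership of p and q in nabla
  have hp_mem : p ∈ nabla β := by
    rw [mem_nabla_iff]
    refine ⟨fun i => if 0 < ξ (β i) then 1 else 0, fun i => ?_, ?_⟩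
    · by_cases h : 0 < ξ (β i) <;> simp [h]
    · rw [hp, hPdef, Finset.sum_filter]
      congr 1
      refine Finset.sum_congr rfl fun i _ => ?_
      by_cases h : 0 < ξ (β i) <;> simp [h]
  have hq_mem : q ∈ nabla β := by
    rw [mem_nabla_iff]
    refine ⟨fun i => if ξ (β i) < 0 then 1 else 0, fun i => ?_, ?_⟩
    · by_cases h : ξ (β i) < 0 <;> simp [h]
    · rw [hq, hNdef, Finset.sum_filter]
      congr 1
      refine Finset.sum_congr rfl fun i _ => ?_
      by_cases h : ξ (β i) < 0 <;> simp [h]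
  have hξp_eq : ξ p = 2⁻¹ * ∑ i, (if 0 < ξ (β i) then ξ (β i) else 0) := by
    rw [hp, map_smul, smul_eq_mul, map_sum, hPdef, Finset.sum_filter]
  have hξq_eq : ξ q = 2⁻¹ * ∑ i, (if ξ (β i) < 0 then ξ (β i) else 0) := by
    rw [hq, map_smul, smul_eq_mul, map_sum, hNdef, Finset.sum_filter]
  -- max and min of ξ on nabla
  have hterm_le : ∀ (s : Fin N → ℝ), (∀ i, s i ∈ Set.Icc (0:ℝ) 1) →
      ∀ i, s i * ξ (β i) ≤ (if 0 < ξ (β i) then ξ (β i) else 0) := by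
    intro s hs i
    rcases le_or_gt (ξ (β i)) 0 with h | h
    · rw [if_neg (not_lt.2 h)]
      exact mul_nonpos_of_nonneg_of_nonpos (hs i).1 h
    · rw [if_pos h]
      exact mul_le_of_le_one_left h.le (hs i).2
  have hmax : ∀ y ∈ nabla β, ξ y ≤ ξ p := by
    intro y hy
    rw [mem_nabla_iff] at hy
    obtain ⟨s, hs, rfl⟩ := hy
    rw [map_smul, smul_eq_mul, map_sum, hξp_eq]
    have h1 : ∑ i, ξ (s i • β i) ≤ ∑ i, (if 0 < ξ (β i) then ξ (β i) else 0) := by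
      refine Finset.sum_le_sum fun i _ => ?_
      rw [map_smul, smul_eq_mul]
      exact hterm_le s hs i
    nlinarith [h1]
  have hmin : ∀ y ∈ nabla β, ξ q ≤ ξ y := by
    intro y hy
    rw [mem_nabla_iff] at hy
    obtain ⟨s, hs, rfl⟩ := hy
    rw [hξq_eq, map_smul, smul_eq_mul, map_sum]
    have h1 : ∑ i, (if ξ (β i) < 0 then ξ (β i) else 0) ≤ ∑ i, ξ (s i • β i) := by
      refine Finset.sum_le_sum fun i _ => ?_
      rw [map_smul, smul_eq_mul]
      rcases lt_or_ge (ξ (β i)) 0 with h | h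
      · rw [if_pos h]
        nlinarith [(hs i).1, (hs i).2]
      · rw [if_neg (not_lt.2 h)]
        exact mul_nonneg (hs i).1 h
    nlinarith [h1]
  -- points of nabla where ξ attains its maximum
  have hface_eq : ∀ y ∈ nabla β, ξ y = ξ p →
      ∃ t : Fin N → ℝ, (∀ i, ξ (β i) ≠ 0 → t i = 0) ∧ y = p + ∑ i, t i • β i := by
    intro y hy heq
    rw [mem_nabla_iff] at hy
    obtain ⟨s, hs, rfl⟩ := hy
    have hsum0 : ∑ i, ((if 0 < ξ (β i) then ξ (β i) else 0) - s i * ξ (β i)) = 0 := by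
      rw [Finset.sum_sub_distrib]
      have h1 : ξ ((2⁻¹:ℝ) • ∑ i, s i • β i) = 2⁻¹ * ∑ i, s i * ξ (β i) := by
        rw [map_smul, smul_eq_mul, map_sum]
        congr 1
        exact Finset.sum_congr rfl fun i _ => by rw [map_smul, smul_eq_mul]
      rw [h1, hξp_eq] at heq
      have : ∑ i, s i * ξ (β i) = ∑ i, (if 0 < ξ (β i) then ξ (β i) else 0) := by
        nlinarith [heq]
      rw [this, sub_self]
    have hterm0 : ∀ i, (if 0 < ξ (β i) then ξ (β i) else 0) - s i * ξ (β i) = 0 := by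
      intro i
      have := (Finset.sum_eq_zero_iff_of_nonneg
        (fun i _ => sub_nonneg.2 (hterm_le s hs i))).1 hsum0
      exact this i (Finset.mem_univ i)
    refine ⟨fun i => 2⁻¹ * (if ξ (β i) = 0 then s i else 0), fun i hi => by simp [hi], ?_⟩
    have hsum : ∑ i, s i • β i =
        ∑ i ∈ P, β i + ∑ i, (if ξ (β i) = 0 then s i else 0) • β i := by
      rw [hPdef, Finset.sum_filter, ← Finset.sum_add_distrib]
      refine Finset.sum_congr rfl fun i _ => ?_
      rcases lt_trichotomy (ξ (β i)) 0 with h | h | h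
      · have h0 := hterm0 i
        rw [if_neg (not_lt.2 h.le)] at h0
        have hs0 : s i = 0 := by
          have hmul : s i * ξ (β i) = 0 := by linarith
          rcases mul_eq_zero.1 hmul with h' | h'
          · exact h'
          · exact absurd h' h.ne
        rw [hs0, if_neg (not_lt.2 h.le), if_neg h.ne]
        simp
      · rw [if_neg (by rw [h]; exact lt_irrefl 0), if_pos h]
        simp
      · have h0 := hterm0 i
        rw [if_pos h] at h0
        have hs1 : s i = 1 := by
          have hmul : (s i - 1) * ξ (β i) = 0 := by ring_nf; linarith
          rcases mul_eq_zero.1 hmul with h' | h'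
          · linarith
          · exact absurd h' h.ne'
        rw [hs1, if_pos h, if_neg h.ne']
        simp
    rw [hsum, smul_add, ← hp, Finset.smul_sum]
    congr 1
    refine Finset.sum_congr rfl fun i _ => ?_
    rw [smul_smul]
  -- the cone over J contains the span of the β i for i ∈ J
  have hconeJ : ∀ t : Fin N → ℝ, (∀ i, ξ (β i) ≠ 0 → t i = 0) →
      (∑ i, t i • β i) ∈ coneI β Jf := by
    intro t ht
    set M : ℝ := ∑ i, |t i| with hM
    have hMn : ∀ i, |t i| ≤ M :=
      fun i => Finset.single_le_sum (fun j _ => abs_nonneg (t j)) (Finset.mem_univ i)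
    refine ⟨fun i => if ξ (β i) = 0 then t i + M else 0, fun i => ?_, fun i hi => ?_, ?_⟩
    · show (0:ℝ) ≤ if ξ (β i) = 0 then t i + M else 0
      by_cases h : ξ (β i) = 0
      · rw [if_pos h]
        have := neg_abs_le (t i)
        have := hMn i
        linarith
      · rw [if_neg h]
    · show (if ξ (β i) = 0 then t i + M else 0) = 0
      simp only [hJdef, Finset.mem_filter, Finset.mem_univ, true_and] at hi
      rw [if_neg hi]
    · show (∑ i, t i • β i) = ∑ i, (if ξ (β i) = 0 then t i + M else 0) • β i
      have hterm : ∀ i, (if ξ (β i) = 0 then t i + M else 0) • β i =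
          t i • β i + (if ξ (β i) = 0 then M • β i else 0) := by
        intro i
        by_cases h : ξ (β i) = 0
        · rw [if_pos h, if_pos h, add_smul]
        · rw [if_neg h, if_neg h, ht i h]
          simp
      rw [Finset.sum_congr rfl fun i _ => hterm i, Finset.sum_add_distrib]
      have : ∑ i, (if ξ (β i) = 0 then M • β i else 0) = M • ∑ i ∈ Jf, β i := by
        rw [hJdef, Finset.sum_filter, Finset.smul_sum]
        refine Finset.sum_congr rfl fun i _ => ?_
        by_cases h : ξ (β i) = 0 <;> simp [h]
      rw [this, hJ0, smul_zero, add_zero]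
  have hJsubIf : Jf ⊆ If := by
    intro i hi
    simp only [hJdef, hIdef, Finset.mem_filter, Finset.mem_univ, true_and] at hi ⊢
    exact le_of_eq hi
  have hmono : coneI β Jf ⊆ coneI β If := by
    rintro y ⟨c, h1, h2, h3⟩
    exact ⟨c, h1, fun i hi => h2 i (fun hmem => hi (hJsubIf hmem)), h3⟩
  -- facts about the exposed face
  have hpF : p ∈ exposedFace β ξ := ⟨hp_mem, hmax⟩
  have hpaff : p ∈ affineSpan ℝ (exposedFace β ξ) := subset_affineSpan ℝ _ hpF
  have hdirβ : ∀ j, ξ (β j) = 0 → β j ∈ (affineSpan ℝ (exposedFace β ξ)).direction := by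
    intro j hj
    have hmem2 : p + (2⁻¹:ℝ) • β j ∈ nabla β := by
      rw [mem_nabla_iff]
      refine ⟨fun i => (if 0 < ξ (β i) then 1 else 0) + (if i = j then 1 else 0),
        fun i => ?_, ?_⟩
      · by_cases h2 : i = j
        · subst h2
          simp [hj]
        · by_cases h : 0 < ξ (β i) <;> simp [h, h2]
      · have : ∑ i, ((if 0 < ξ (β i) then (1:ℝ) else 0) + (if i = j then 1 else 0)) • β i
            = ∑ i ∈ P, β i + β j := by
          rw [Finset.sum_congr rfl (fun i _ => add_smul _ _ _), Finset.sum_add_distrib]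
          congr 1
          · rw [hPdef, Finset.sum_filter]
            refine Finset.sum_congr rfl fun i _ => ?_
            by_cases h : 0 < ξ (β i) <;> simp [h]
          · rw [Finset.sum_congr rfl (fun i _ => ?_), Finset.sum_ite_eq' Finset.univ j β]
            · simp
            · by_cases h : i = j <;> simp [h]
        rw [this, smul_add, ← hp]
    have hF2 : p + (2⁻¹:ℝ) • β j ∈ exposedFace β ξ := by
      refine ⟨hmem2, fun y hy => ?_⟩
      have h1 := hmax y hy
      have h2 : ξ (p + (2⁻¹:ℝ) • β j) = ξ p := by
        simp [hj]
      rw [h2]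
      exact h1
    have h2 : p + (2⁻¹:ℝ) • β j ∈ affineSpan ℝ (exposedFace β ξ) :=
      subset_affineSpan ℝ _ hF2
    have hv := AffineSubspace.vsub_mem_direction h2 hpaff
    have heq : (p + (2⁻¹:ℝ) • β j) -ᵥ p = (2⁻¹:ℝ) • β j := by
      simp [vsub_eq_sub]
    rw [heq] at hv
    have := Submodule.smul_mem _ (2:ℝ) hv
    rw [smul_smul] at this
    norm_num at this
    exact this
  -- the direction submodule W
  set W : Submodule ℝ (Fin k → ℝ) :=
    { carrier := {v | ∃ t : Fin N → ℝ, (∀ i, ξ (β i) ≠ 0 → t i = 0) ∧ v = ∑ i, t i • β i}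
      add_mem' := by
        rintro a b ⟨t, ht, rfl⟩ ⟨u, hu, rfl⟩
        refine ⟨t + u, fun i hi => by simp [ht i hi, hu i hi], ?_⟩
        rw [← Finset.sum_add_distrib]
        exact Finset.sum_congr rfl fun i _ => by simp [add_smul]
      zero_mem' := ⟨0, fun _ _ => rfl, by simp⟩
      smul_mem' := by
        rintro c a ⟨t, ht, rfl⟩
        refine ⟨c • t, fun i hi => by simp [ht i hi], ?_⟩
        rw [Finset.smul_sum]
        exact Finset.sum_congr rfl fun i _ => by simp [smul_smul] } with hW
  ext x
  simp only [Set.mem_inter_iff]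
  constructor
  · -- forward inclusion
    rintro ⟨⟨c, hc, n2, hn2, hx2⟩, ⟨c', hc', n1, hn1, hx1⟩⟩
    obtain ⟨d, hd0, hdsupp, rfl⟩ := hc
    obtain ⟨d', hd'0, hd'supp, rfl⟩ := hc'
    have hi_of : ∀ i, ¬ ξ (β i) ≤ 0 → d i = 0 := by
      intro i h
      refine hdsupp i ?_
      simp only [hIdef, Finset.mem_filter, Finset.mem_univ, true_and]
      exact h
    have hj_of : ∀ i, ξ (β i) ≠ 0 → d' i = 0 := by
      intro i h
      refine hd'supp i ?_
      simp only [hJdef, Finset.mem_filter, Finset.mem_univ, true_and]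
      exact h
    have hξc : ξ (∑ i, d i • β i) ≤ 0 := by
      rw [map_sum]
      refine Finset.sum_nonpos fun i _ => ?_
      rw [map_smul, smul_eq_mul]
      by_cases h : ξ (β i) ≤ 0
      · exact mul_nonpos_of_nonneg_of_nonpos (hd0 i) h
      · rw [hi_of i h, zero_mul]
    have hξc' : ξ (∑ i, d' i • β i) = 0 := by
      rw [map_sum]
      refine Finset.sum_eq_zero fun i _ => ?_
      rw [map_smul, smul_eq_mul]
      by_cases h : ξ (β i) = 0
      · rw [h, mul_zero]
      · rw [hj_of i h, zero_mul]
    have hx1' : x = -(∑ i, d' i • β i) + n1 := by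
      rw [hx1, hJ0]
      simp
    have hξx1 : ξ x = ξ n1 := by
      rw [hx1', map_add, map_neg, hξc', neg_zero, zero_add]
    have hξx_le : ξ x ≤ ξ p := by
      rw [hξx1]
      exact hmax n1 hn1
    have hξx_ge : ξ p ≤ ξ x := by
      have hξx2 : ξ x = 2 * ξ p - ξ (∑ i, d i • β i) + ξ n2 := by
        rw [hx2, hIf_sum, neg_neg, map_add, map_sub, map_smul, smul_eq_mul]
      have h1 := hmin n2 hn2
      rw [hqp, map_neg] at h1
      rw [hξx2]
      linarith
    have hξn1 : ξ n1 = ξ p := by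
      rw [← hξx1]
      exact le_antisymm hξx_le hξx_ge
    obtain ⟨t, htsupp, hn1eq⟩ := hface_eq n1 hn1 hξn1
    have hxeq : x = p + ∑ i, (t i - d' i) • β i := by
      rw [hx1', hn1eq]
      rw [Finset.sum_congr rfl (fun i (_ : i ∈ Finset.univ) => sub_smul (t i) (d' i) (β i)),
        Finset.sum_sub_distrib]
      abel
    have hw : (∑ i, (t i - d' i) • β i) ∈ (affineSpan ℝ (exposedFace β ξ)).direction := by
      refine Submodule.sum_mem _ fun i _ => ?_
      by_cases h : ξ (β i) = 0
      · exact Submodule.smul_mem _ _ (hdirβ i h)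
      · rw [htsupp i h, hj_of i h]
        simp
    have hmem := AffineSubspace.vadd_mem_of_mem_direction hw hpaff
    have : (∑ i, (t i - d' i) • β i) +ᵥ p = x := by
      rw [vadd_eq_add, hxeq]
      abel
    rw [this] at hmem
    exact hmem
  · -- reverse inclusion
    intro hx
    have hFsub : exposedFace β ξ ⊆ (AffineSubspace.mk' p W : Set (Fin k → ℝ)) := by
      intro y hy
      have hymax : ξ y = ξ p := le_antisymm (hmax y hy.1) (hy.2 p hp_mem)
      obtain ⟨t, ht, hyeq⟩ := hface_eq y hy.1 hymax
      have hymem : y ∈ AffineSubspace.mk' p W := by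
        rw [AffineSubspace.mem_mk']
        refine ⟨t, ht, ?_⟩
        rw [vsub_eq_sub, hyeq]
        abel
      exact hymem
    have hle : affineSpan ℝ (exposedFace β ξ) ≤ AffineSubspace.mk' p W :=
      (affineSpan_le).2 hFsub
    have hxW : x ∈ AffineSubspace.mk' p W := hle hx
    rw [AffineSubspace.mem_mk'] at hxW
    obtain ⟨t, ht, hteq⟩ := hxW
    have hxeq : x = p + ∑ i, t i • β i := by
      rw [← hteq, vsub_eq_sub]
      abel
    have hcone : (∑ i, (fun i => -t i) i • β i) ∈ coneI β Jf := by
      refine hconeJ _ fun i hi => ?_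
      simp [ht i hi]
    have hsumneg : (∑ i, (fun i => -t i) i • β i) = -∑ i, t i • β i := by
      rw [← Finset.sum_neg_distrib]
      exact Finset.sum_congr rfl fun i _ => by simp [neg_smul]
    constructor
    · refine ⟨∑ i, (fun i => -t i) i • β i, hmono hcone, q, hq_mem, ?_⟩
      rw [hsumneg, hIf_sum, hqp, hxeq]
      have : -(-((2:ℝ) • p)) - -∑ i, t i • β i + -p = ((2:ℝ) • p - p) + ∑ i, t i • β i := by
        abel
      rw [this, two_smul]
      abel
    · refine ⟨∑ i, (fun i => -t i) i • β i, hcone, p, hp_mem, ?_⟩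
      rw [hsumneg, hJ0, hxeq]
      abel

end
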